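/- Let L be a finite distributive strong upper semilattice, a a minimal element of L, and F, G ∈ D order filters on M. Suppose m, m₁, m₂ ∈ L satisfy IsGLB ((F ∩ G) ∩ Set.Ici a) m, IsGLB (F ∩ Set.Ici a) m₁, and IsGLB (G ∩ Set.Ici a) m₂. Then m = m₁ ⊔ m₂; that is, f_a(F ∩ G) = f_a(F) ⊔ f_a(G). -/

import Mathlib

/-- A strong upper semilattice: any two elements with a common lower bound
have a greatest lower bound. -/
def StrongUpper (L : Type*) [SemilatticeSup L] : Prop :=
  ∀ x y : L, (∃ z, z ≤ x ∧ z ≤ y) → ∃ w, IsGLB {x, y} w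

/-- Every interval is a distributive lattice. -/
def IntervalDistrib (L : Type*) [SemilatticeSup L] : Prop :=
  ∀ a x y z w w' : L, a ≤ x → a ≤ y → a ≤ z →
    IsGLB {x, y} w → IsGLB {x ⊔ z, y ⊔ z} w' → w' = w ⊔ z

/-- Meet-irreducible element. -/
def MeetIrred {L : Type*} [SemilatticeSup L] [OrderTop L] (m : L) : Prop :=
  m ≠ ⊤ ∧ ∀ p q : L, IsGLB {p, q} m → m = p ∨ m = q

section Aux

variable {L : Type*} [SemilatticeSup L] [OrderTop L]

/-- Existence of glb of a finite set with a common lower bound. -/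
lemma exists_glb_finset (hS : StrongUpper L) :
    ∀ (s : Finset L) (z : L), (∀ x ∈ s, z ≤ x) → ∃ w, IsGLB (s : Set L) w := by
  classical
  intro s
  induction s using Finset.induction_on with
  | empty => intro z _; exact ⟨⊤, by simpa using isGLB_empty⟩
  | insert _ _ hx ih =>
    rename_i x s
    intro z hz
    obtain ⟨w, hw⟩ := ih z (fun y hy => hz y (Finset.mem_insert_of_mem hy))
    have hzw : z ≤ w := hw.2 (fun y hy => hz y (Finset.mem_insert_of_mem hy))
    obtain ⟨w', hw'⟩ := hS x w ⟨z, hz x (Finset.mem_insert_self x s), hzw⟩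
    refine ⟨w', ?_, ?_⟩
    · intro y hy
      rw [Finset.coe_insert] at hy
      rcases hy with rfl | hy
      · exact hw'.1 (by simp)
      · exact (hw'.1 (by simp)).trans (hw.1 hy)
    · intro c hc
      have hcx : c ≤ x := hc (by simp)
      have hcw : c ≤ w := hw.2 (fun y hy => hc (by simp [hy]))
      exact hw'.2 (by rintro y (rfl | rfl) <;> assumption)

/-- Binary meet-prime property of meet-irreducibles. -/
lemma prime2 (hD : IntervalDistrib L) (hS : StrongUpper L) {a x y w mm : L}
    (hax : a ≤ x) (hay : a ≤ y) (ham : a ≤ mm) (hmm : MeetIrred mm)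
    (hw : IsGLB {x, y} w) (hwm : w ≤ mm) : x ≤ mm ∨ y ≤ mm := by
  obtain ⟨w', hw'⟩ := hS (x ⊔ mm) (y ⊔ mm) ⟨mm, le_sup_right, le_sup_right⟩
  have h := hD a x y mm w w' hax hay ham hw hw'
  rw [sup_eq_right.mpr hwm] at h
  subst h
  rcases hmm.2 _ _ hw' with h | h
  · exact Or.inl (le_sup_left.trans h.ge)
  · exact Or.inr (le_sup_left.trans h.ge)

/-- Meet-prime property for finite sets. -/
lemma prime_finset (hD : IntervalDistrib L) (hS : StrongUpper L) (a : L) :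
    ∀ (s : Finset L), (∀ x ∈ s, a ≤ x) → ∀ w mm : L, a ≤ mm → MeetIrred mm →
      IsGLB (s : Set L) w → w ≤ mm → ∃ x ∈ s, x ≤ mm := by
  classical
  intro s
  induction s using Finset.induction_on with
  | empty =>
    intro _ w mm _ hmm hw hwm
    have : (⊤ : L) ≤ w := hw.2 (by simp)
    exact absurd (top_le_iff.mp (this.trans hwm)) hmm.1
  | insert _ _ hx ih =>
    rename_i x s
    intro hs w mm ham hmm hw hwm
    rcases s.eq_empty_or_nonempty with rfl | hne
    · have hwx : w = x := le_antisymm (hw.1 (by simp)) (hw.2 (by simp))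
      exact ⟨x, Finset.mem_insert_self x ∅, hwx ▸ hwm⟩
    · obtain ⟨ws, hws⟩ := exists_glb_finset hS s a
        (fun y hy => hs y (Finset.mem_insert_of_mem hy))
      have haws : a ≤ ws := hws.2 (fun y hy => hs y (Finset.mem_insert_of_mem hy))
      have hpair : IsGLB {x, ws} w := by
        constructor
        · rintro y (rfl | rfl)
          · exact hw.1 (by simp)
          · exact hws.2 (fun z hz => hw.1 (by
              simp only [Finset.coe_insert, Set.mem_insert_iff]
              exact Or.inr hz))
        · intro c hc
          refine hw.2 ?_
          intro y hy
          rw [Finset.coe_insert] at hy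
          rcases hy with rfl | hy
          · exact hc (by simp)
          · exact (hc (by simp)).trans (hws.1 hy)
      rcases prime2 hD hS (hs x (Finset.mem_insert_self x s)) haws ham hmm hpair hwm with h | h
      · exact ⟨x, Finset.mem_insert_self x s, h⟩
      · obtain ⟨y, hy, hym⟩ := ih (fun y hy => hs y (Finset.mem_insert_of_mem hy))
          ws mm ham hmm hws h
        exact ⟨y, Finset.mem_insert_of_mem hy, hym⟩

/-- Every element is the glb of the meet-irreducibles above it. -/
lemma glb_irreds [Finite L] (x : L) : IsGLB {m' | MeetIrred m' ∧ x ≤ m'} x := by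
  induction x using WellFoundedGT.induction with
  | _ x ih =>
    constructor
    · exact fun y hy => hy.2
    · intro c hc
      by_cases htop : x = ⊤
      · subst htop; exact le_top
      by_cases hirr : MeetIrred x
      · exact hc ⟨hirr, le_rfl⟩
      · have : ∃ p q, IsGLB {p, q} x ∧ ¬(x = p ∨ x = q) := by
          by_contra h
          push_neg at h
          exact hirr ⟨htop, fun p q hpq => h p q hpq⟩
        obtain ⟨p, q, hpq, hne⟩ := this
        push_neg at hne
        have hxp : x < p := lt_of_le_of_ne (hpq.1 (by simp)) hne.1
        have hxq : x < q := lt_of_le_of_ne (hpq.1 (by simp)) hne.2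
        have hcp : c ≤ p := (ih p hxp).2
          (fun y hy => hc ⟨hy.1, hxp.le.trans hy.2⟩)
        have hcq : c ≤ q := (ih q hxq).2
          (fun y hy => hc ⟨hy.1, hxq.le.trans hy.2⟩)
        exact hpq.2 (by rintro y (rfl | rfl) <;> assumption)

end Aux

theorem fa_inter {L : Type*} [SemilatticeSup L] [OrderTop L] [Finite L]
    (hS : StrongUpper L) (hD : IntervalDistrib L)
    (a : L) (ha : IsMin a)
    (F G : Set L)
    (hF1 : ∀ m ∈ F, MeetIrred m)
    (hF2 : ∀ m ∈ F, ∀ m', MeetIrred m' → m ≤ m' → m' ∈ F)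
    (hG1 : ∀ m ∈ G, MeetIrred m)
    (hG2 : ∀ m ∈ G, ∀ m', MeetIrred m' → m ≤ m' → m' ∈ G)
    (m m₁ m₂ : L)
    (hm : IsGLB ((F ∩ G) ∩ Set.Ici a) m)
    (hm₁ : IsGLB (F ∩ Set.Ici a) m₁)
    (hm₂ : IsGLB (G ∩ Set.Ici a) m₂) :
    m = m₁ ⊔ m₂ := by
  classical
  have ham₁ : a ≤ m₁ := hm₁.2 (fun y hy => hy.2)
  have ham₂ : a ≤ m₂ := hm₂.2 (fun y hy => hy.2)
  have hglb : IsGLB {m' | MeetIrred m' ∧ m₁ ⊔ m₂ ≤ m'} (m₁ ⊔ m₂) := glb_irreds _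
  -- the key inclusion
  have hsub : {m' | MeetIrred m' ∧ m₁ ⊔ m₂ ≤ m'} ⊆ (F ∩ G) ∩ Set.Ici a := by
    rintro m' ⟨hmi, hle⟩
    have ham' : a ≤ m' := ham₁.trans (le_sup_left.trans hle)
    have hm'F : m' ∈ F := by
      have hfin := (F ∩ Set.Ici a).toFinite
      have hglb₁ : IsGLB (hfin.toFinset : Set L) m₁ := by
        rwa [Set.Finite.coe_toFinset]
      obtain ⟨x, hx, hxm'⟩ := prime_finset hD hS a hfin.toFinset
        (fun x hx => ((hfin.mem_toFinset.mp hx).2 : a ≤ x)) m₁ m' ham' hmi hglb₁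
        (le_sup_left.trans hle)
      exact hF2 x (hfin.mem_toFinset.mp hx).1 m' hmi hxm'
    have hm'G : m' ∈ G := by
      have hfin := (G ∩ Set.Ici a).toFinite
      have hglb₂ : IsGLB (hfin.toFinset : Set L) m₂ := by
        rwa [Set.Finite.coe_toFinset]
      obtain ⟨x, hx, hxm'⟩ := prime_finset hD hS a hfin.toFinset
        (fun x hx => ((hfin.mem_toFinset.mp hx).2 : a ≤ x)) m₂ m' ham' hmi hglb₂
        (le_sup_right.trans hle)
      exact hG2 x (hfin.mem_toFinset.mp hx).1 m' hmi hxm'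
    exact ⟨⟨hm'F, hm'G⟩, ham'⟩
  have le1 : m₁ ⊔ m₂ ≤ m := hm.2 (fun y hy =>
    sup_le (hm₁.1 ⟨hy.1.1, hy.2⟩) (hm₂.1 ⟨hy.1.2, hy.2⟩))
  have le2 : m ≤ m₁ ⊔ m₂ := hglb.2 (fun y hy => hm.1 (hsub hy))
  exact le_antisymm le2 le1
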